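/- Let p ≤ q be positive integers, Θ ⊆ ℝ^p, and L : Θ → ℝ^q a map that is a homeomorphism from Θ onto L(Θ). Let θ₀ be an interior point of Θ, assume L is twice continuously differentiable on a neighbourhood of θ₀ and that the q×p Jacobian matrix L̇(θ₀) has full rank p. Let Ω : Θ → ℝ^{q×q} take symmetric positive definite values with eigenvalues 0 < λ₁(θ) ≤ … ≤ λ_q(θ), be twice continuously differentiable on a neighbourhood of θ₀, continuous on Θ, and satisfy inf_{θ∈Θ} λ₁(θ) > 0. On a probability space let L̂_n : Ω' → ℝ^q (n ∈ ℕ) be random vectors converging in probability to L(θ₀), and set f_n(θ) = (L̂_n − L(θ))ᵀ Ω(θ) (L̂_n − L(θ)). Then for every ε > 0 the probability of the event that the set of minimizers of f_n over Θ is nonempty, consists of exactly one point θ̂_n, and satisfies ‖θ̂_n − θ₀‖ ≤ ε, tends to one as n → ∞. -/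

import Mathlib

open MeasureTheory ProbabilityTheory Filter Matrix Topology
open scoped ENNReal NNReal RealInnerProductSpace

noncomputable section

set_option maxHeartbeats 1000000

/-- Convergence in distribution (weak convergence of the laws): the integrals of every
bounded continuous function converge. -/
def TendstoInDistribution {α E : Type*} [MeasurableSpace α] [MeasurableSpace E] [TopologicalSpace E]
    (μ : Measure α) (X : ℕ → α → E) (ν : Measure E) : Prop :=
  ∀ g : BoundedContinuousFunction E ℝ,
    Tendsto (fun n => ∫ ω, g (X n ω) ∂μ) atTop (𝓝 (∫ x, g x ∂ν))

/-- `ν` is the centered Gaussian law on `ℝ^q` with covariance matrix `S`: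
every linear marginal is a centered real Gaussian with the corresponding variance. -/
def IsCenteredGaussian {q : ℕ} (ν : Measure (EuclideanSpace ℝ (Fin q)))
    (S : Matrix (Fin q) (Fin q) ℝ) : Prop :=
  IsProbabilityMeasure ν ∧
    ∀ a : EuclideanSpace ℝ (Fin q),
      ν.map (fun x => (inner ℝ a x : ℝ)) =
        gaussianReal 0 (Real.toNNReal (a ⬝ᵥ S.mulVec a))

/-- The chi-square distribution with `r` degrees of freedom, i.e. the Gamma distribution
with shape `r/2` and rate `1/2`. -/
def chiSquareMeasure (r : ℕ) : Measure ℝ := gammaMeasure ((r : ℝ) / 2) (1 / 2)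

/-- The Jacobian matrix of a map `ℝ^p → ℝ^q` at a point. -/
def jacobianMatrix {p q : ℕ} (L : EuclideanSpace ℝ (Fin p) → EuclideanSpace ℝ (Fin q))
    (θ : EuclideanSpace ℝ (Fin p)) : Matrix (Fin q) (Fin p) ℝ :=
  Matrix.of fun a i => fderiv ℝ (fun θ' => L θ' a) θ (EuclideanSpace.single i 1)


lemma coord_le_norm {n : ℕ} (i : Fin n) (x : EuclideanSpace ℝ (Fin n)) : |x i| ≤ ‖x‖ := by
  rw [EuclideanSpace.norm_eq]
  have h1 : |x i|^2 ≤ ∑ j : Fin n, ‖x j‖ ^ 2 := by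
    have := Finset.single_le_sum (f := fun j => ‖x j‖ ^ 2) (fun j _ => sq_nonneg _) (Finset.mem_univ i)
    simpa [Real.norm_eq_abs, sq_abs] using this
  nlinarith [Real.sq_sqrt (Finset.sum_nonneg (fun j (_ : j ∈ Finset.univ) => sq_nonneg ‖x j‖)),
    Real.sqrt_nonneg (∑ j : Fin n, ‖x j‖ ^ 2), abs_nonneg (x i)]

lemma dot_self_eq {n : ℕ} (x : EuclideanSpace ℝ (Fin n)) : (⇑x) ⬝ᵥ (⇑x) = ‖x‖^2 := by
  rw [EuclideanSpace.norm_eq, Real.sq_sqrt (Finset.sum_nonneg (fun j _ => sq_nonneg ‖x j‖)), dotProduct]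
  exact Finset.sum_congr rfl fun j _ => by simp [Real.norm_eq_abs, sq_abs, sq]

lemma embed_loc {p q : ℕ} (Θ : Set (EuclideanSpace ℝ (Fin p)))
    (L : EuclideanSpace ℝ (Fin p) → EuclideanSpace ℝ (Fin q))
    (hL : Topology.IsEmbedding (fun θ : Θ => L θ))
    (θ₀ : EuclideanSpace ℝ (Fin p)) (hθ₀ : θ₀ ∈ Θ) (ε : ℝ) (hε : 0 < ε) :
    ∃ δ > 0, ∀ θ ∈ Θ, ‖L θ - L θ₀‖ < δ → ‖θ - θ₀‖ < ε := by
  have hind := hL.toIsInducing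
  have hS : IsOpen {θ : Θ | ‖(θ : EuclideanSpace ℝ (Fin p)) - θ₀‖ < ε} := by
    have hc : Continuous fun θ : Θ => ‖(θ : EuclideanSpace ℝ (Fin p)) - θ₀‖ :=
      (continuous_subtype_val.sub continuous_const).norm
    exact isOpen_lt hc continuous_const
  rw [hind.isOpen_iff] at hS
  obtain ⟨W, hWopen, hWeq⟩ := hS
  have hmem : L θ₀ ∈ W := by
    have : (⟨θ₀, hθ₀⟩ : Θ) ∈ (fun θ : Θ => L θ) ⁻¹' W := by
      rw [hWeq]; simp [hε]
    exact this
  obtain ⟨δ, hδpos, hball⟩ := Metric.isOpen_iff.mp hWopen _ hmem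
  refine ⟨δ, hδpos, fun θ hθ hLθ => ?_⟩
  have : (⟨θ, hθ⟩ : Θ) ∈ (fun θ : Θ => L θ) ⁻¹' W := by
    apply hball
    rw [Metric.mem_ball, dist_eq_norm]; exact hLθ
  rw [hWeq] at this
  exact this

lemma mulVec_inj_of_rank {p q : ℕ} (M : Matrix (Fin q) (Fin p) ℝ) (h : M.rank = p) :
    Function.Injective M.mulVec := by
  rw [show M.mulVec = M.mulVecLin from rfl, ← LinearMap.ker_eq_bot]
  have h2 := LinearMap.finrank_range_add_finrank_ker M.mulVecLin
  rw [Matrix.rank] at h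
  rw [Module.finrank_fintype_fun_eq_card, Fintype.card_fin, h] at h2
  have : Module.finrank ℝ (LinearMap.ker M.mulVecLin) = 0 := by omega
  exact Submodule.finrank_eq_zero.mp this


lemma det_main {p q : ℕ}
    (Θ : Set (EuclideanSpace ℝ (Fin p)))
    (L : EuclideanSpace ℝ (Fin p) → EuclideanSpace ℝ (Fin q))
    (hLemb : Topology.IsEmbedding (fun θ : Θ => L θ))
    (θ₀ : EuclideanSpace ℝ (Fin p)) (hθ₀ : θ₀ ∈ interior Θ)
    (U₀ : Set (EuclideanSpace ℝ (Fin p))) (hU₀open : IsOpen U₀) (hθU : θ₀ ∈ U₀)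
    (hUΘ : U₀ ⊆ interior Θ)
    (hL2 : ContDiffOn ℝ 2 L U₀)
    (Om : EuclideanSpace ℝ (Fin p) → Matrix (Fin q) (Fin q) ℝ)
    (hOm2 : ∀ a b, ContDiffOn ℝ 2 (fun θ => Om θ a b) U₀)
    (hrank : (Matrix.of fun a i => fderiv ℝ (fun θ' => L θ' a) θ₀ (EuclideanSpace.single i 1) : Matrix (Fin q) (Fin p) ℝ).rank = p)
    (lam1 : ℝ) (hlam1pos : 0 < lam1)
    (hlam1 : ∀ θ ∈ Θ, ∀ v : Fin q → ℝ, lam1 * (v ⬝ᵥ v) ≤ v ⬝ᵥ (Om θ).mulVec v)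
    (ε : ℝ) (hε : 0 < ε) :
    ∃ δ > 0, ∀ y : EuclideanSpace ℝ (Fin q), ‖y - L θ₀‖ < δ →
      ∃ θhat ∈ Θ, IsMinOn (fun θ => (fun a => y a - L θ a) ⬝ᵥ (Om θ).mulVec (fun a => y a - L θ a)) Θ θhat ∧
        (∀ θ' ∈ Θ, IsMinOn (fun θ => (fun a => y a - L θ a) ⬝ᵥ (Om θ).mulVec (fun a => y a - L θ a)) Θ θ' → θ' = θhat) ∧
        ‖θhat - θ₀‖ ≤ ε := by
  classical
  set y₀ : EuclideanSpace ℝ (Fin q) := L θ₀ with hy₀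
  set g : (EuclideanSpace ℝ (Fin p)) × (EuclideanSpace ℝ (Fin q)) → ℝ :=
    fun z => ∑ a, (z.2 a - L z.1 a) * ∑ b, Om z.1 a b * (z.2 b - L z.1 b) with hgdef
  have hgG : ∀ (y : EuclideanSpace ℝ (Fin q)) (θ : EuclideanSpace ℝ (Fin p)),
      (fun a => y a - L θ a) ⬝ᵥ (Om θ).mulVec (fun a => y a - L θ a) = g (θ, y) := by
    intro y θ
    simp [hgdef, dotProduct, Matrix.mulVec]
  have hVopen : IsOpen (U₀ ×ˢ (Set.univ : Set (EuclideanSpace ℝ (Fin q)))) :=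
    hU₀open.prod isOpen_univ
  have hz₀V : (θ₀, y₀) ∈ U₀ ×ˢ (Set.univ : Set (EuclideanSpace ℝ (Fin q))) := ⟨hθU, trivial⟩
  have hLa2 : ∀ a : Fin q, ContDiffOn ℝ 2 (fun θ => L θ a) U₀ := fun a => by
    simpa [Function.comp_def] using (EuclideanSpace.proj a).contDiff.comp_contDiffOn hL2
  have hmapsfst : Set.MapsTo (Prod.fst : (EuclideanSpace ℝ (Fin p)) × (EuclideanSpace ℝ (Fin q)) → EuclideanSpace ℝ (Fin p))
      (U₀ ×ˢ (Set.univ : Set (EuclideanSpace ℝ (Fin q)))) U₀ := fun z hz => hz.1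
  have hsub : ∀ b : Fin q, ContDiffOn ℝ 2
      (fun z : (EuclideanSpace ℝ (Fin p)) × (EuclideanSpace ℝ (Fin q)) => z.2 b - L z.1 b)
      (U₀ ×ˢ (Set.univ : Set (EuclideanSpace ℝ (Fin q)))) := fun b => by
    have h1 : ContDiff ℝ 2 (fun z : (EuclideanSpace ℝ (Fin p)) × (EuclideanSpace ℝ (Fin q)) => z.2 b) :=
      (EuclideanSpace.proj b : EuclideanSpace ℝ (Fin q) →L[ℝ] ℝ).contDiff.comp contDiff_snd
    exact h1.contDiffOn.sub ((hLa2 b).comp contDiffOn_fst hmapsfst)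
  have hOmz : ∀ a b : Fin q, ContDiffOn ℝ 2
      (fun z : (EuclideanSpace ℝ (Fin p)) × (EuclideanSpace ℝ (Fin q)) => Om z.1 a b)
      (U₀ ×ˢ (Set.univ : Set (EuclideanSpace ℝ (Fin q)))) := fun a b =>
    (hOm2 a b).comp contDiffOn_fst hmapsfst
  have hg2 : ContDiffOn ℝ 2 g (U₀ ×ˢ (Set.univ : Set (EuclideanSpace ℝ (Fin q)))) := by
    apply ContDiffOn.sum; intro a _
    exact (hsub a).mul (ContDiffOn.sum fun b _ => (hOmz a b).mul (hsub b))
  have hgdiff : ∀ z ∈ U₀ ×ˢ (Set.univ : Set (EuclideanSpace ℝ (Fin q))), DifferentiableAt ℝ g z := fun z hz =>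
    (hg2.differentiableOn (by norm_num)).differentiableAt (hVopen.mem_nhds hz)
  set Φ : (EuclideanSpace ℝ (Fin p)) × (EuclideanSpace ℝ (Fin q)) →
      (EuclideanSpace ℝ (Fin p)) × (EuclideanSpace ℝ (Fin q)) :=
    fun z => (WithLp.toLp 2 (fun i => fderiv ℝ g z (EuclideanSpace.single i 1, 0)), z.2) with hΦdef
  -- critical points
  have hcrit : ∀ θ ∈ U₀, ∀ y : EuclideanSpace ℝ (Fin q),
      IsLocalMin (fun θ' => g (θ', y)) θ → Φ (θ, y) = (0, y) := by
    intro θ hθ y hmin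
    have hd := hgdiff (θ, y) ⟨hθ, trivial⟩
    have hcomp : HasFDerivAt (fun θ' => g (θ', y))
        ((fderiv ℝ g (θ, y)).comp (ContinuousLinearMap.inl ℝ _ _)) θ :=
      hd.hasFDerivAt.comp (f := fun θ' => (θ', y)) θ (hasFDerivAt_prodMk_left (𝕜 := ℝ) θ y)
    have h0 := hmin.fderiv_eq_zero
    rw [hcomp.fderiv] at h0
    have h0' : ∀ i, fderiv ℝ g (θ, y) (EuclideanSpace.single i 1, 0) = 0 := by
      intro i
      have := congrArg (fun (T : _ →L[ℝ] ℝ) => T (EuclideanSpace.single i 1)) h0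
      simpa using this
    simp only [hΦdef, Prod.mk.injEq]
    refine ⟨?_, trivial⟩
    ext i
    simpa using h0' i
  -- Φ is C¹
  have hfd1 : ContDiffOn ℝ 1 (fderiv ℝ g) (U₀ ×ˢ (Set.univ : Set (EuclideanSpace ℝ (Fin q)))) := by
    have hg2' : ContDiffOn ℝ ((1 : ℕ) + 1) g (U₀ ×ˢ (Set.univ : Set (EuclideanSpace ℝ (Fin q)))) := by
      exact_mod_cast hg2
    exact ((contDiffOn_succ_iff_fderiv_of_isOpen hVopen).mp hg2').2.2
  have hΦ1 : ContDiffOn ℝ 1 Φ (U₀ ×ˢ (Set.univ : Set (EuclideanSpace ℝ (Fin q)))) := by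
    apply ContDiffOn.prodMk
    · rw [contDiffOn_euclidean]
      intro i
      exact hfd1.clm_apply contDiffOn_const
    · exact contDiffOn_snd
  have hΦstrict : HasStrictFDerivAt Φ (fderiv ℝ Φ (θ₀, y₀)) (θ₀, y₀) :=
    (hΦ1.contDiffAt (hVopen.mem_nhds hz₀V)).hasStrictFDerivAt one_ne_zero
  set D := fderiv ℝ Φ (θ₀, y₀) with hDdef
  have hD : HasFDerivAt Φ D (θ₀, y₀) := hΦstrict.hasFDerivAt
  set W := fderiv ℝ (fderiv ℝ g) (θ₀, y₀) with hWdef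
  have hW : HasFDerivAt (fderiv ℝ g) W (θ₀, y₀) :=
    ((hfd1.differentiableOn one_ne_zero).differentiableAt (hVopen.mem_nhds hz₀V)).hasFDerivAt
  have hDsnd : ∀ v, (D v).2 = v.2 := by
    intro v
    have h1 : HasFDerivAt (fun z => (Φ z).2)
        ((ContinuousLinearMap.snd ℝ (EuclideanSpace ℝ (Fin p)) (EuclideanSpace ℝ (Fin q))).comp D) (θ₀, y₀) := by
      simpa [Function.comp_def] using
        (ContinuousLinearMap.snd ℝ (EuclideanSpace ℝ (Fin p)) (EuclideanSpace ℝ (Fin q))).hasFDerivAt.comp (θ₀, y₀) hD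
    have h2 : HasFDerivAt (fun z => (Φ z).2)
        (ContinuousLinearMap.snd ℝ (EuclideanSpace ℝ (Fin p)) (EuclideanSpace ℝ (Fin q))) (θ₀, y₀) := by
      simp only [hΦdef]
      exact (ContinuousLinearMap.snd ℝ (EuclideanSpace ℝ (Fin p)) (EuclideanSpace ℝ (Fin q))).hasFDerivAt
    have := h1.unique h2
    calc (D v).2 = ((ContinuousLinearMap.snd ℝ _ _).comp D) v := rfl
    _ = v.2 := by rw [this]; rfl
  have hDfst : ∀ v i, (D v).1 i = W v (EuclideanSpace.single i 1, 0) := by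
    intro v i
    set ev : (((EuclideanSpace ℝ (Fin p)) × (EuclideanSpace ℝ (Fin q))) →L[ℝ] ℝ) →L[ℝ] ℝ :=
      ContinuousLinearMap.apply ℝ ℝ ((EuclideanSpace.single i 1 : EuclideanSpace ℝ (Fin p)), (0 : EuclideanSpace ℝ (Fin q))) with hevdef
    have h1 : HasFDerivAt (fun z => (Φ z).1 i) (ev.comp W) (θ₀, y₀) := by
      have := ev.hasFDerivAt.comp (θ₀, y₀) hW
      simpa [hΦdef, hevdef, Function.comp_def] using this
    have h2 : HasFDerivAt (fun z => (Φ z).1 i)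
        ((EuclideanSpace.proj i).comp
          ((ContinuousLinearMap.fst ℝ (EuclideanSpace ℝ (Fin p)) (EuclideanSpace ℝ (Fin q))).comp D)) (θ₀, y₀) := by
      have hfst : HasFDerivAt (fun z => (Φ z).1)
          ((ContinuousLinearMap.fst ℝ (EuclideanSpace ℝ (Fin p)) (EuclideanSpace ℝ (Fin q))).comp D) (θ₀, y₀) := by
        simpa [Function.comp_def] using
          (ContinuousLinearMap.fst ℝ (EuclideanSpace ℝ (Fin p)) (EuclideanSpace ℝ (Fin q))).hasFDerivAt.comp (θ₀, y₀) hD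
      simpa [Function.comp_def] using
        (EuclideanSpace.proj i (𝕜 := ℝ)).hasFDerivAt.comp (θ₀, y₀) hfst
    have := h2.unique h1
    calc (D v).1 i = ((EuclideanSpace.proj i).comp
        ((ContinuousLinearMap.fst ℝ (EuclideanSpace ℝ (Fin p)) (EuclideanSpace ℝ (Fin q))).comp D)) v := rfl
    _ = W v (EuclideanSpace.single i 1, 0) := by rw [this]; rfl
  -- the key second-derivative positivity input (proved later)
  have hkey : ∀ u : EuclideanSpace ℝ (Fin p), (∀ v : EuclideanSpace ℝ (Fin p), W (u, 0) (v, 0) = 0) → u = 0 := by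
    intro u hu
    set w : Fin q → ℝ := fun a => fderiv ℝ (fun θ => L θ a) θ₀ u with hwdef
    set c : ℝ → EuclideanSpace ℝ (Fin p) := fun t => θ₀ + t • u with hcdef
    have hc0 : c 0 = θ₀ := by simp [hcdef]
    have hcder : ∀ t : ℝ, HasDerivAt c u t := by
      intro t
      have h1 : HasDerivAt (fun t : ℝ => t • u) u t := by simpa using (hasDerivAt_id t).smul_const u
      simpa [hcdef] using h1.const_add θ₀
    have hccont : Continuous c := by
      simp only [hcdef]; fun_prop
    have hIopen : IsOpen (c ⁻¹' U₀) := hU₀open.preimage hccont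
    have hI0 : (0:ℝ) ∈ c ⁻¹' U₀ := by
      simp only [Set.mem_preimage, hc0]; exact hθU
    have hImem : c ⁻¹' U₀ ∈ 𝓝 (0:ℝ) := hIopen.mem_nhds hI0
    set ρ : Fin q → ℝ → ℝ := fun a t => y₀ a - L (c t) a with hρdef
    set m : Fin q → Fin q → ℝ → ℝ := fun a b t => Om (c t) a b with hmdef
    set ρd : Fin q → ℝ → ℝ := fun a t => -(fderiv ℝ (fun θ => L θ a) (c t) u) with hρddef
    set md : Fin q → Fin q → ℝ → ℝ := fun a b t => fderiv ℝ (fun θ => Om θ a b) (c t) u with hmddef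
    have hρ0 : ∀ a, ρ a 0 = 0 := by
      intro a; simp [hρdef, hc0, hy₀]
    have hρder : ∀ (a : Fin q), ∀ t ∈ c ⁻¹' U₀, HasDerivAt (ρ a) (ρd a t) t := by
      intro a t ht
      have hdiff : DifferentiableAt ℝ (fun θ => L θ a) (c t) :=
        ((hLa2 a).differentiableOn (by norm_num)).differentiableAt (hU₀open.mem_nhds ht)
      have h1 : HasDerivAt (fun s => L (c s) a) (fderiv ℝ (fun θ => L θ a) (c t) u) t :=
        hdiff.hasFDerivAt.comp_hasDerivAt t (hcder t)
      simpa [hρdef, hρddef] using h1.const_sub (y₀ a)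
    have hmder : ∀ (a b : Fin q), ∀ t ∈ c ⁻¹' U₀, HasDerivAt (m a b) (md a b t) t := by
      intro a b t ht
      have hdiff : DifferentiableAt ℝ (fun θ => Om θ a b) (c t) :=
        ((hOm2 a b).differentiableOn (by norm_num)).differentiableAt (hU₀open.mem_nhds ht)
      exact hdiff.hasFDerivAt.comp_hasDerivAt t (hcder t)
    have hρdder : ∀ a : Fin q, ∃ v, HasDerivAt (ρd a) v 0 := by
      intro a
      have hLa2' : ContDiffOn ℝ ((1:ℕ) + 1) (fun θ => L θ a) U₀ := by exact_mod_cast hLa2 a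
      have h2 : ContDiffOn ℝ 1 (fderiv ℝ (fun θ => L θ a)) U₀ :=
        ((contDiffOn_succ_iff_fderiv_of_isOpen hU₀open).mp hLa2').2.2
      have hdiff2 : DifferentiableAt ℝ (fderiv ℝ (fun θ => L θ a)) θ₀ :=
        (h2.differentiableOn one_ne_zero).differentiableAt (hU₀open.mem_nhds hθU)
      have hdiff2' : HasFDerivAt (fderiv ℝ (fun θ => L θ a))
          (fderiv ℝ (fderiv ℝ (fun θ => L θ a)) θ₀) (c 0) := by
        rw [hc0]; exact hdiff2.hasFDerivAt
      have h3 := hdiff2'.comp_hasDerivAt 0 (hcder 0)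
      have h4 := (ContinuousLinearMap.apply ℝ ℝ u).hasFDerivAt.comp_hasDerivAt 0 h3
      exact ⟨_, h4.neg⟩
    have hmdder : ∀ a b : Fin q, ∃ v, HasDerivAt (md a b) v 0 := by
      intro a b
      have hOm2' : ContDiffOn ℝ ((1:ℕ) + 1) (fun θ => Om θ a b) U₀ := by exact_mod_cast hOm2 a b
      have h2 : ContDiffOn ℝ 1 (fderiv ℝ (fun θ => Om θ a b)) U₀ :=
        ((contDiffOn_succ_iff_fderiv_of_isOpen hU₀open).mp hOm2').2.2
      have hdiff2 : DifferentiableAt ℝ (fderiv ℝ (fun θ => Om θ a b)) θ₀ :=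
        (h2.differentiableOn one_ne_zero).differentiableAt (hU₀open.mem_nhds hθU)
      have hdiff2' : HasFDerivAt (fderiv ℝ (fun θ => Om θ a b))
          (fderiv ℝ (fderiv ℝ (fun θ => Om θ a b)) θ₀) (c 0) := by
        rw [hc0]; exact hdiff2.hasFDerivAt
      have h3 := hdiff2'.comp_hasDerivAt 0 (hcder 0)
      have h4 := (ContinuousLinearMap.apply ℝ ℝ u).hasFDerivAt.comp_hasDerivAt 0 h3
      exact ⟨_, h4⟩
    set S : ℝ → ℝ := fun t => ∑ a, (ρd a t * (∑ b, m a b t * ρ b t)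
      + ρ a t * (∑ b, (md a b t * ρ b t + m a b t * ρd b t))) with hSdef
    have hφS : ∀ t ∈ c ⁻¹' U₀, HasDerivAt (fun t => g (c t, y₀)) (S t) t := by
      intro t ht
      have hφeq : (fun t => g (c t, y₀)) = fun t => ∑ a, ρ a t * ∑ b, m a b t * ρ b t := rfl
      rw [hφeq]
      exact HasDerivAt.fun_sum fun a _ => (hρder a t ht).mul
        (HasDerivAt.fun_sum fun b _ => (hmder a b t ht).mul (hρder b t ht))
    have hφψ : ∀ t ∈ c ⁻¹' U₀, HasDerivAt (fun t => g (c t, y₀)) (fderiv ℝ g (c t, y₀) (u, 0)) t := by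
      intro t ht
      have hpd : HasDerivAt (fun s => ((c s, y₀) :
          (EuclideanSpace ℝ (Fin p)) × (EuclideanSpace ℝ (Fin q)))) (u, 0) t :=
        (hcder t).prodMk (hasDerivAt_const t y₀)
      exact (hgdiff (c t, y₀) (Set.mem_prod.mpr ⟨ht, Set.mem_univ _⟩)).hasFDerivAt.comp_hasDerivAt t hpd
    have hSψ : ∀ t ∈ c ⁻¹' U₀, S t = fderiv ℝ g (c t, y₀) (u, 0) := fun t ht =>
      (hφS t ht).unique (hφψ t ht)
    have hψder : HasDerivAt (fun t => fderiv ℝ g (c t, y₀) (u, 0)) (W (u, 0) (u, 0)) 0 := by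
      have hpd : HasDerivAt (fun s => ((c s, y₀) :
          (EuclideanSpace ℝ (Fin p)) × (EuclideanSpace ℝ (Fin q)))) (u, 0) 0 :=
        (hcder 0).prodMk (hasDerivAt_const 0 y₀)
      have hW0 : HasFDerivAt (fderiv ℝ g) W (c 0, y₀) := by rw [hc0]; exact hW
      have h1 := hW0.comp_hasDerivAt 0 hpd
      have h2 := (ContinuousLinearMap.apply ℝ ℝ
        ((u, 0) : (EuclideanSpace ℝ (Fin p)) × (EuclideanSpace ℝ (Fin q)))).hasFDerivAt.comp_hasDerivAt 0 h1
      simpa [Function.comp_def] using h2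
    have hSW : HasDerivAt S (W (u, 0) (u, 0)) 0 := by
      refine hψder.congr_of_eventuallyEq ?_
      exact Filter.eventuallyEq_of_mem hImem hSψ
    choose vρ hvρ using hρdder
    choose vm hvm using hmdder
    have hSder2 : HasDerivAt S (∑ a,
        ((vρ a * (∑ b, m a b 0 * ρ b 0) + ρd a 0 * (∑ b, (md a b 0 * ρ b 0 + m a b 0 * ρd b 0)))
        + (ρd a 0 * (∑ b, (md a b 0 * ρ b 0 + m a b 0 * ρd b 0)) + ρ a 0 * (∑ b,
          ((vm a b * ρ b 0 + md a b 0 * ρd b 0) + (md a b 0 * ρd b 0 + m a b 0 * vρ b)))))) 0 := by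
      refine HasDerivAt.fun_sum fun a _ => HasDerivAt.add ?_ ?_
      · exact (hvρ a).mul (HasDerivAt.fun_sum fun b _ => (hmder a b 0 hI0).mul (hρder b 0 hI0))
      · exact (hρder a 0 hI0).mul (HasDerivAt.fun_sum fun b _ =>
          HasDerivAt.add ((hvm a b).mul (hρder b 0 hI0)) ((hmder a b 0 hI0).mul (hvρ b)))
    have hval := hSW.unique hSder2
    have hρdw : ∀ a, ρd a 0 = -(w a) := by
      intro a; simp [hρddef, hc0, hwdef]
    have hm0 : ∀ a b, m a b 0 = Om θ₀ a b := by
      intro a b; simp [hmdef, hc0]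
    have hdot0 : ∑ a, w a * ∑ b, Om θ₀ a b * w b = 0 := by
      rw [hu u] at hval
      simp only [hρ0, mul_zero, zero_mul, add_zero, zero_add, hρdw, hm0, Finset.sum_const_zero] at hval
      have : (0:ℝ) = ∑ a, 2 * (w a * ∑ b, Om θ₀ a b * w b) := by
        rw [hval]
        refine Finset.sum_congr rfl fun a _ => ?_
        have : ∑ b, Om θ₀ a b * -(w b) = -(∑ b, Om θ₀ a b * w b) := by
          rw [← Finset.sum_neg_distrib]
          exact Finset.sum_congr rfl fun b _ => by ring
        rw [this]; ring
      rw [← Finset.mul_sum] at this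
      linarith
    have hwzero : ∀ a, w a = 0 := by
      have hle := hlam1 θ₀ (interior_subset hθ₀) w
      have hdotOm : w ⬝ᵥ (Om θ₀).mulVec w = 0 := hdot0
      rw [hdotOm] at hle
      have hnn : ∀ a ∈ Finset.univ, 0 ≤ w a * w a := fun a _ => mul_self_nonneg _
      have hww : w ⬝ᵥ w = ∑ a, w a * w a := rfl
      have hsum0 : ∑ a, w a * w a = 0 := by
        have h1 : (0:ℝ) ≤ ∑ a, w a * w a := Finset.sum_nonneg hnn
        nlinarith [hle, hlam1pos]
      intro a
      have := (Finset.sum_eq_zero_iff_of_nonneg hnn).mp hsum0 a (Finset.mem_univ a)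
      exact mul_self_eq_zero.mp this
    -- rank argument
    have hJw : ∀ a, (Matrix.of fun a i => fderiv ℝ (fun θ' => L θ' a) θ₀
        (EuclideanSpace.single i 1)).mulVec (fun i => u i) a = w a := by
      intro a
      have hdiff : DifferentiableAt ℝ (fun θ => L θ a) θ₀ :=
        ((hLa2 a).differentiableOn (by norm_num)).differentiableAt (hU₀open.mem_nhds hθU)
      have hbase := (EuclideanSpace.basisFun (Fin p) ℝ).sum_repr u
      simp only [EuclideanSpace.basisFun_apply, EuclideanSpace.basisFun_repr] at hbase
      calc (Matrix.of fun a i => fderiv ℝ (fun θ' => L θ' a) θ₀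
          (EuclideanSpace.single i 1)).mulVec (fun i => u i) a
          = ∑ i, fderiv ℝ (fun θ' => L θ' a) θ₀ (EuclideanSpace.single i 1) * u i := by
            simp [Matrix.mulVec, dotProduct, mul_comm]
      _ = ∑ i, fderiv ℝ (fun θ' => L θ' a) θ₀ (u i • EuclideanSpace.single i 1) := by
            refine Finset.sum_congr rfl fun i _ => ?_
            rw [(fderiv ℝ (fun θ' => L θ' a) θ₀).map_smul]
            simp [mul_comm]
      _ = fderiv ℝ (fun θ' => L θ' a) θ₀ (∑ i, u i • EuclideanSpace.single i 1) :=
            (map_sum (fderiv ℝ (fun θ' => L θ' a) θ₀) _ _).symm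
      _ = w a := by rw [hbase]
    have hJ0 : (Matrix.of fun a i => fderiv ℝ (fun θ' => L θ' a) θ₀
        (EuclideanSpace.single i 1)).mulVec (fun i => u i) = 0 := by
      funext a
      rw [hJw a, hwzero a]; rfl
    have hinj := mulVec_inj_of_rank _ hrank
    have hu0 : (fun i => u i) = (0 : Fin p → ℝ) := by
      apply hinj
      rw [hJ0, Matrix.mulVec_zero]
    ext i
    exact congrFun hu0 i
  have hDinj : Function.Injective D := by
    have : ∀ v, D v = 0 → v = 0 := by
      intro v hv
      obtain ⟨u, w⟩ := v
      have hw : w = 0 := by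
        have := hDsnd (u, w); rw [hv] at this; exact this.symm
      subst hw
      have h1 : ∀ i, W (u, 0) (EuclideanSpace.single i 1, 0) = 0 := by
        intro i
        have := hDfst (u, (0 : EuclideanSpace ℝ (Fin q))) i
        rw [hv] at this
        simpa using this.symm
      have h2 : ∀ v : EuclideanSpace ℝ (Fin p), W (u, 0) (v, 0) = 0 := by
        intro v
        have hv' : ((v, 0) : (EuclideanSpace ℝ (Fin p)) × (EuclideanSpace ℝ (Fin q)))
            = ∑ i, v i • ((EuclideanSpace.single i 1 : EuclideanSpace ℝ (Fin p)), (0 : EuclideanSpace ℝ (Fin q))) := by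
          have hbase := (EuclideanSpace.basisFun (Fin p) ℝ).sum_repr v
          simp only [EuclideanSpace.basisFun_apply, EuclideanSpace.basisFun_repr] at hbase
          rw [Prod.ext_iff]
          constructor
          · rw [Prod.fst_sum]
            simp only [Prod.smul_mk]
            exact hbase.symm
          · rw [Prod.snd_sum]
            simp
        rw [hv', map_sum]
        refine Finset.sum_eq_zero fun i _ => ?_
        rw [(W (u, 0)).map_smul, h1 i, smul_zero]
      have hu : u = 0 := hkey u h2
      simp [hu]
    intro a b hab
    have : D (a - b) = 0 := by rw [map_sub, hab, sub_self]
    have := this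
    have hz := ‹∀ v, D v = 0 → v = 0› _ this
    exact sub_eq_zero.mp hz
  -- local injectivity of Φ near (θ₀, y₀)
  set Deq := (LinearEquiv.ofInjectiveEndo (D.toLinearMap) hDinj).toContinuousLinearEquiv with hDeqdef
  have hDeqD : (Deq : (EuclideanSpace ℝ (Fin p)) × (EuclideanSpace ℝ (Fin q)) →L[ℝ]
      (EuclideanSpace ℝ (Fin p)) × (EuclideanSpace ℝ (Fin q))) = D :=
    ContinuousLinearMap.ext fun v => rfl
  have hΦstrict' : HasStrictFDerivAt Φ
      (Deq : (EuclideanSpace ℝ (Fin p)) × (EuclideanSpace ℝ (Fin q)) →L[ℝ]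
        (EuclideanSpace ℝ (Fin p)) × (EuclideanSpace ℝ (Fin q))) (θ₀, y₀) := by
    rw [hDeqD]; exact hΦstrict
  obtain ⟨s, hs, hsinj⟩ : ∃ s ∈ 𝓝 ((θ₀, y₀) : (EuclideanSpace ℝ (Fin p)) × (EuclideanSpace ℝ (Fin q))),
      Set.InjOn Φ s := by
    obtain ⟨s, hs, hlinv⟩ := hΦstrict'.eventually_left_inverse.exists_mem
    exact ⟨s, hs, fun x hx x' hx' hxx => by rw [← hlinv x hx, ← hlinv x' hx', hxx]⟩
  obtain ⟨r, hrpos, hball⟩ := Metric.mem_nhds_iff.mp hs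
  -- choose ε₂
  have hUr : IsOpen (U₀ ∩ Metric.ball θ₀ r) := hU₀open.inter Metric.isOpen_ball
  have hθUr : θ₀ ∈ U₀ ∩ Metric.ball θ₀ r := ⟨hθU, Metric.mem_ball_self hrpos⟩
  obtain ⟨ε₂', hε₂'pos, hε₂'⟩ := Metric.isOpen_iff.mp hUr θ₀ hθUr
  set ε₂ := min (ε₂' / 2) ε with hε₂def
  have hε₂pos : 0 < ε₂ := lt_min (by linarith) hε
  have hε₂ε : ε₂ ≤ ε := min_le_right _ _
  have hKsub : Metric.closedBall θ₀ ε₂ ⊆ U₀ ∩ Metric.ball θ₀ r := by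
    intro x hx
    apply hε₂'
    rw [Metric.mem_closedBall] at hx
    rw [Metric.mem_ball]
    calc dist x θ₀ ≤ ε₂ := hx
    _ ≤ ε₂' / 2 := min_le_left _ _
    _ < ε₂' := by linarith
  have hθ₀Θ : θ₀ ∈ Θ := interior_subset hθ₀
  -- embedding localization
  obtain ⟨δL, hδLpos, hδL⟩ : ∃ δL > 0, ∀ θ ∈ Θ, ‖L θ - L θ₀‖ < δL → ‖θ - θ₀‖ < ε₂ :=
    embed_loc Θ L hLemb θ₀ hθ₀Θ ε₂ hε₂pos
  -- constants
  set C : ℝ := (∑ a, ∑ b, |Om θ₀ a b|) + 1 with hCdef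
  have hCpos : 0 < C := by
    have : (0:ℝ) ≤ ∑ a, ∑ b, |Om θ₀ a b| :=
      Finset.sum_nonneg fun a _ => Finset.sum_nonneg fun b _ => abs_nonneg _
    linarith
  have hcoordy : ∀ (y : EuclideanSpace ℝ (Fin q)) (a : Fin q), |y a - L θ₀ a| ≤ ‖y - y₀‖ := by
    intro y a
    have h : (y - y₀) a = y a - L θ₀ a := rfl
    rw [← h]
    exact coord_le_norm a (y - y₀)
  have hGθ₀ : ∀ y : EuclideanSpace ℝ (Fin q), g (θ₀, y) ≤ C * ‖y - y₀‖^2 := by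
    intro y
    have step : ∀ a : Fin q, (y a - L θ₀ a) * ∑ b, Om θ₀ a b * (y b - L θ₀ b)
        ≤ ∑ b, |Om θ₀ a b| * ‖y - y₀‖^2 := by
      intro a
      calc (y a - L θ₀ a) * ∑ b, Om θ₀ a b * (y b - L θ₀ b)
          ≤ |(y a - L θ₀ a) * ∑ b, Om θ₀ a b * (y b - L θ₀ b)| := le_abs_self _
      _ = |y a - L θ₀ a| * |∑ b, Om θ₀ a b * (y b - L θ₀ b)| := abs_mul _ _
      _ ≤ ‖y - y₀‖ * ∑ b, |Om θ₀ a b| * ‖y - y₀‖ := by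
          apply mul_le_mul (hcoordy y a) ?_ (abs_nonneg _) (norm_nonneg _)
          calc |∑ b, Om θ₀ a b * (y b - L θ₀ b)| ≤ ∑ b, |Om θ₀ a b * (y b - L θ₀ b)| :=
              Finset.abs_sum_le_sum_abs _ _
          _ ≤ ∑ b, |Om θ₀ a b| * ‖y - y₀‖ := by
              apply Finset.sum_le_sum
              intro b _
              rw [abs_mul]
              exact mul_le_mul_of_nonneg_left (hcoordy y b) (abs_nonneg _)
      _ = ∑ b, |Om θ₀ a b| * ‖y - y₀‖^2 := by
          rw [Finset.mul_sum]
          apply Finset.sum_congr rfl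
          intro b _
          ring
    calc g (θ₀, y) = ∑ a, (y a - L θ₀ a) * ∑ b, Om θ₀ a b * (y b - L θ₀ b) := rfl
    _ ≤ ∑ a, ∑ b, |Om θ₀ a b| * ‖y - y₀‖^2 := Finset.sum_le_sum fun a _ => step a
    _ = (∑ a, ∑ b, |Om θ₀ a b|) * ‖y - y₀‖^2 := by
        rw [Finset.sum_mul]
        exact Finset.sum_congr rfl fun a _ => by rw [Finset.sum_mul]
    _ ≤ C * ‖y - y₀‖^2 := by
        apply mul_le_mul_of_nonneg_right _ (sq_nonneg _)
        rw [hCdef]; linarith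
  have hGlow : ∀ (y : EuclideanSpace ℝ (Fin q)) (θ : EuclideanSpace ℝ (Fin p)), θ ∈ Θ →
      lam1 * ‖y - L θ‖^2 ≤ g (θ, y) := by
    intro y θ hθ
    have h1 := hlam1 θ hθ (fun a => y a - L θ a)
    rw [hgG] at h1
    have h2 : ((fun a => y a - L θ a) : Fin q → ℝ) ⬝ᵥ (fun a => y a - L θ a) = ‖y - L θ‖^2 :=
      dot_self_eq (y - L θ)
    rw [h2] at h1
    exact h1
  -- choose δ
  set B : ℝ := lam1 * (δL / 2)^2 with hBdef
  have hBpos : 0 < B := by positivity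
  set δ : ℝ := min (min (δL / 2) ε₂) (min r (Real.sqrt (B / (2 * C)))) with hδdef
  have hδpos : 0 < δ := by
    apply lt_min (lt_min (by linarith) hε₂pos)
    exact lt_min hrpos (Real.sqrt_pos.mpr (by positivity))
  refine ⟨δ, hδpos, ?_⟩
  intro y hy
  -- rewrite the criterion in terms of g
  have hGg : (fun θ => (fun a => y a - L θ a) ⬝ᵥ (Om θ).mulVec (fun a => y a - L θ a))
      = fun θ => g (θ, y) := funext fun θ => hgG y θ
  rw [hGg]
  have hCδ : C * δ^2 < B := by
    have h1 : δ ≤ Real.sqrt (B / (2 * C)) := le_trans (min_le_right _ _) (min_le_right _ _)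
    have h2 : δ^2 ≤ B / (2 * C) := by
      rw [← Real.sq_sqrt (by positivity : (0:ℝ) ≤ B / (2 * C))]
      exact pow_le_pow_left₀ (le_of_lt hδpos) h1 2
    calc C * δ^2 ≤ C * (B / (2 * C)) := by nlinarith
    _ = B / 2 := by field_simp
    _ < B := by linarith
  have key1 : g (θ₀, y) < B := by
    calc g (θ₀, y) ≤ C * ‖y - y₀‖^2 := hGθ₀ y
    _ ≤ C * δ^2 := by
        apply mul_le_mul_of_nonneg_left _ (le_of_lt hCpos)
        exact pow_le_pow_left₀ (norm_nonneg _) (le_of_lt hy) 2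
    _ < B := hCδ
  have key2 : ∀ θ ∈ Θ, δL ≤ ‖L θ - y₀‖ → B ≤ g (θ, y) := by
    intro θ hθ hfar
    have hδhalf : δ ≤ δL / 2 := le_trans (min_le_left _ _) (min_le_left _ _)
    have h1 : δL / 2 ≤ ‖y - L θ‖ := by
      have := norm_sub_norm_le (L θ - y₀) (y - y₀)
      have heq : (L θ - y₀) - (y - y₀) = -(y - L θ) := by abel
      rw [heq, norm_neg] at this
      linarith
    calc B = lam1 * (δL / 2)^2 := rfl
    _ ≤ lam1 * ‖y - L θ‖^2 := by
        apply mul_le_mul_of_nonneg_left _ (le_of_lt hlam1pos)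
        apply pow_le_pow_left₀ (by linarith) h1 2
    _ ≤ g (θ, y) := hGlow y θ hθ
  have key3 : ∀ θ ∈ Θ, g (θ, y) < B → ‖θ - θ₀‖ < ε₂ := by
    intro θ hθ hlt
    by_cases hc : ‖L θ - y₀‖ < δL
    · exact hδL θ hθ hc
    · exact absurd (key2 θ hθ (le_of_not_gt hc)) (not_le.mpr hlt)
  -- existence of the minimizer over the closed ball
  have hKΘ : Metric.closedBall θ₀ ε₂ ⊆ Θ := fun x hx =>
    interior_subset (hUΘ ((hKsub hx).1))
  have hcontK : ContinuousOn (fun θ => g (θ, y)) (Metric.closedBall θ₀ ε₂) := by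
    apply ContinuousOn.mono _ (fun x hx => (hKsub hx).1)
    have hc1 : ContinuousOn g (U₀ ×ˢ (Set.univ : Set (EuclideanSpace ℝ (Fin q)))) := hg2.continuousOn
    exact hc1.comp (Continuous.continuousOn (continuous_id.prodMk continuous_const))
      (fun θ hθ => ⟨hθ, trivial⟩)
  obtain ⟨θhat, hθhatK, hminK⟩ := (isCompact_closedBall θ₀ ε₂).exists_isMinOn
    ⟨θ₀, Metric.mem_closedBall_self (le_of_lt hε₂pos)⟩ hcontK
  have hθhatΘ : θhat ∈ Θ := hKΘ hθhatK
  have hθhatθ₀ : g (θhat, y) ≤ g (θ₀, y) :=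
    (isMinOn_iff.mp hminK) θ₀ (Metric.mem_closedBall_self (le_of_lt hε₂pos))
  have hminΘ : IsMinOn (fun θ => g (θ, y)) Θ θhat := by
    rw [isMinOn_iff]
    intro θ hθ
    by_cases hb : g (θ, y) < B
    · have hnear := key3 θ hθ hb
      exact (isMinOn_iff.mp hminK) θ (Metric.mem_closedBall.mpr (by
        rw [dist_eq_norm]; exact le_of_lt hnear))
    · calc g (θhat, y) ≤ g (θ₀, y) := hθhatθ₀
      _ ≤ B := le_of_lt key1
      _ ≤ g (θ, y) := le_of_not_gt hb
  -- every minimizer is a critical point in the small ball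
  have hcritmin : ∀ θ' ∈ Θ, IsMinOn (fun θ => g (θ, y)) Θ θ' →
      Φ (θ', y) = (0, y) ∧ θ' ∈ Metric.ball θ₀ ε₂ := by
    intro θ' hθ' hmin'
    have hval : g (θ', y) ≤ g (θ₀, y) := (isMinOn_iff.mp hmin') θ₀ hθ₀Θ
    have hnear : ‖θ' - θ₀‖ < ε₂ := key3 θ' hθ' (lt_of_le_of_lt hval key1)
    have hballmem : θ' ∈ Metric.ball θ₀ ε₂ := by rw [Metric.mem_ball, dist_eq_norm]; exact hnear
    have hθ'U : θ' ∈ U₀ := (hKsub (Metric.ball_subset_closedBall hballmem)).1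
    have hθ'int : Θ ∈ 𝓝 θ' := mem_interior_iff_mem_nhds.mp (hUΘ hθ'U)
    have hlocal : IsLocalMin (fun θ => g (θ, y)) θ' := hmin'.isLocalMin hθ'int
    exact ⟨hcrit θ' hθ'U y hlocal, hballmem⟩
  refine ⟨θhat, hθhatΘ, hminΘ, ?_, ?_⟩
  · intro θ' hθ' hmin'
    obtain ⟨hΦ', hball'⟩ := hcritmin θ' hθ' hmin'
    obtain ⟨hΦhat, hballhat⟩ := hcritmin θhat hθhatΘ hminΘ
    have hmem : ∀ θ'' ∈ Metric.ball θ₀ ε₂, ((θ'', y) :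
        (EuclideanSpace ℝ (Fin p)) × (EuclideanSpace ℝ (Fin q))) ∈ s := by
      intro θ'' hθ''
      apply hball
      rw [Metric.mem_ball, Prod.dist_eq]
      apply max_lt
      · exact Metric.mem_ball.mp ((hKsub (Metric.ball_subset_closedBall hθ'')).2)
      · rw [dist_eq_norm]
        calc ‖y - y₀‖ < δ := hy
        _ ≤ r := le_trans (min_le_right _ _) (min_le_left _ _)
    have := hsinj (hmem θ' hball') (hmem θhat hballhat) (by rw [hΦ', hΦhat])
    exact congrArg Prod.fst this
  · have hb := (hcritmin θhat hθhatΘ hminΘ).2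
    rw [Metric.mem_ball, dist_eq_norm] at hb
    linarith

/-- Existence, uniqueness and consistency of the continuous updating weighted
least squares estimator. -/
theorem stmt0 {p q : ℕ} (hp : 0 < p) (hpq : p ≤ q)
    (Θ : Set (EuclideanSpace ℝ (Fin p)))
    (L : EuclideanSpace ℝ (Fin p) → EuclideanSpace ℝ (Fin q))
    -- `L` is a homeomorphism from `Θ` onto `L(Θ)`
    (hLhomeo : Topology.IsEmbedding (fun θ : Θ => L θ))
    (θ₀ : EuclideanSpace ℝ (Fin p)) (hθ₀ : θ₀ ∈ interior Θ)
    -- `L` is twice continuously differentiable on a neighbourhood of `θ₀`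
    (hLC2 : ∃ U ∈ 𝓝 θ₀, ContDiffOn ℝ 2 L U)
    -- the Jacobian `L̇(θ₀)` has full rank `p`
    (hrank : (jacobianMatrix L θ₀).rank = p)
    (Om : EuclideanSpace ℝ (Fin p) → Matrix (Fin q) (Fin q) ℝ)
    -- `Ω(θ)` is symmetric positive definite
    (hOmPD : ∀ θ ∈ Θ, (Om θ).PosDef)
    -- `Ω` is twice continuously differentiable on a neighbourhood of `θ₀`
    (hOmC2 : ∃ U ∈ 𝓝 θ₀, ∀ a b : Fin q, ContDiffOn ℝ 2 (fun θ => Om θ a b) U)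
    -- `Ω` is continuous on `Θ`
    (hOmCont : ∀ a b : Fin q, ContinuousOn (fun θ => Om θ a b) Θ)
    -- `inf_{θ∈Θ} λ₁(θ) > 0`: a uniform positive lower bound on the Rayleigh quotients
    (lam1 : ℝ) (hlam1pos : 0 < lam1)
    (hlam1 : ∀ θ ∈ Θ, ∀ v : Fin q → ℝ, lam1 * (v ⬝ᵥ v) ≤ v ⬝ᵥ (Om θ).mulVec v)
    -- a probability space carrying the random vectors `L̂_n`
    {α : Type*} [MeasurableSpace α] (μ : Measure α) [IsProbabilityMeasure μ]
    (Lhat : ℕ → α → EuclideanSpace ℝ (Fin q))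
    (hLhatMeas : ∀ n, Measurable (Lhat n))
    -- `L̂_n → L(θ₀)` in probability
    (hprob : TendstoInMeasure μ Lhat atTop (fun _ => L θ₀))
    -- the criterion function `f_n(θ) = (L̂_n − L(θ))ᵀ Ω(θ) (L̂_n − L(θ))`
    (f : ℕ → α → EuclideanSpace ℝ (Fin p) → ℝ)
    (hf : ∀ n ω θ, f n ω θ =
      (fun a => Lhat n ω a - L θ a) ⬝ᵥ (Om θ).mulVec (fun a => Lhat n ω a - L θ a)) :
    -- the probability that `f_n` has a unique minimizer over `Θ`, lying within `ε` of `θ₀`,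
    -- tends to one
    ∀ ε > (0 : ℝ),
      Tendsto (fun n => μ {ω | ∃ θhat ∈ Θ, IsMinOn (f n ω) Θ θhat ∧
          (∀ θ' ∈ Θ, IsMinOn (f n ω) Θ θ' → θ' = θhat) ∧ ‖θhat - θ₀‖ ≤ ε})
        atTop (𝓝 1) := by
  intro ε hε
  obtain ⟨U₁, hU₁, hL2⟩ := hLC2
  obtain ⟨U₂, hU₂, hOm2⟩ := hOmC2
  set U₀ : Set (EuclideanSpace ℝ (Fin p)) := interior U₁ ∩ interior U₂ ∩ interior Θ with hU₀def
  have hU₀open : IsOpen U₀ := ((isOpen_interior.inter isOpen_interior).inter isOpen_interior)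
  have hθU : θ₀ ∈ U₀ :=
    ⟨⟨mem_interior_iff_mem_nhds.mpr hU₁, mem_interior_iff_mem_nhds.mpr hU₂⟩, hθ₀⟩
  have hUΘ : U₀ ⊆ interior Θ := fun x hx => hx.2
  have hL2' : ContDiffOn ℝ 2 L U₀ := hL2.mono fun x hx => interior_subset hx.1.1
  have hOm2' : ∀ a b, ContDiffOn ℝ 2 (fun θ => Om θ a b) U₀ := fun a b =>
    (hOm2 a b).mono fun x hx => interior_subset hx.1.2
  obtain ⟨δ, hδpos, hdet⟩ := det_main Θ L hLhomeo θ₀ hθ₀ U₀ hU₀open hθU hUΘ hL2' Om hOm2'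
    hrank lam1 hlam1pos hlam1 ε hε
  have hsub : ∀ n, {ω | ‖Lhat n ω - L θ₀‖ < δ} ⊆ {ω | ∃ θhat ∈ Θ, IsMinOn (f n ω) Θ θhat ∧
      (∀ θ' ∈ Θ, IsMinOn (f n ω) Θ θ' → θ' = θhat) ∧ ‖θhat - θ₀‖ ≤ ε} := by
    intro n ω hω
    obtain ⟨θhat, h1, h2, h3, h4⟩ := hdet (Lhat n ω) hω
    have hfn : f n ω = fun θ => (fun a => Lhat n ω a - L θ a) ⬝ᵥ
        (Om θ).mulVec (fun a => Lhat n ω a - L θ a) := funext fun θ => hf n ω θ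
    rw [Set.mem_setOf_eq, hfn]
    exact ⟨θhat, h1, h2, h3, h4⟩
  have hlow : ∀ n, 1 - μ {ω | δ ≤ dist (Lhat n ω) (L θ₀)} ≤
      μ {ω | ∃ θhat ∈ Θ, IsMinOn (f n ω) Θ θhat ∧
        (∀ θ' ∈ Θ, IsMinOn (f n ω) Θ θ' → θ' = θhat) ∧ ‖θhat - θ₀‖ ≤ ε} := by
    intro n
    have hunion : (Set.univ : Set α) ⊆ {ω | ‖Lhat n ω - L θ₀‖ < δ} ∪
        {ω | δ ≤ dist (Lhat n ω) (L θ₀)} := by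
      intro ω _
      by_cases hc : ‖Lhat n ω - L θ₀‖ < δ
      · exact Or.inl hc
      · right
        rw [Set.mem_setOf_eq, dist_eq_norm]
        exact le_of_not_gt hc
    have h1 : (1 : ℝ≥0∞) ≤ μ {ω | ‖Lhat n ω - L θ₀‖ < δ} +
        μ {ω | δ ≤ dist (Lhat n ω) (L θ₀)} := by
      calc (1 : ℝ≥0∞) = μ Set.univ := (measure_univ (μ := μ)).symm
      _ ≤ μ ({ω | ‖Lhat n ω - L θ₀‖ < δ} ∪ {ω | δ ≤ dist (Lhat n ω) (L θ₀)}) :=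
          measure_mono hunion
      _ ≤ _ := measure_union_le _ _
    calc 1 - μ {ω | δ ≤ dist (Lhat n ω) (L θ₀)} ≤ μ {ω | ‖Lhat n ω - L θ₀‖ < δ} :=
        tsub_le_iff_right.mpr h1
    _ ≤ _ := measure_mono (hsub n)
  have hcompl : Tendsto (fun n => μ {ω | δ ≤ dist (Lhat n ω) (L θ₀)}) atTop (𝓝 0) :=
    by
      have := hprob (ENNReal.ofReal δ) (ENNReal.ofReal_pos.mpr hδpos)
      simpa only [edist_dist, ENNReal.ofReal_le_ofReal_iff dist_nonneg] using this
  have hlowtends : Tendsto (fun n => 1 - μ {ω | δ ≤ dist (Lhat n ω) (L θ₀)}) atTop (𝓝 1) := by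
    have hcont : ContinuousAt (fun x : ℝ≥0∞ => 1 - x) 0 :=
      (ENNReal.continuous_sub_left ENNReal.one_ne_top).continuousAt
    have := hcont.tendsto.comp hcompl
    simpa [Function.comp_def] using this
  exact tendsto_of_tendsto_of_tendsto_of_le_of_le hlowtends tendsto_const_nhds hlow fun n => prob_le_one
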